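/- For every integer k with 0 ≤ k ≤ n−5: the eigenspace of the operator ψ ↦ H·ψ on C¹(m,g) with eigenvalue 2(n+k−3) is one-dimensional, spanned by the cochain ε*_{n−3−k} ⊗ ε_{2n−6}; moreover 2(n+k−3) is the largest eigenvalue of this operator on C¹(m,g). -/

import Mathlib

noncomputable section

open scoped BigOperators

/-- The underlying vector space of `gl₂(ℝ)`, with basis `Y, H, E, X` at indices `0,1,2,3`. -/
abbrev G2 : Type := Fin 4 → ℝ

/-- The underlying vector space of the Heisenberg algebra `heis_{2n-5}`:
coefficients of `ε_1, …, ε_{2n-6}` together with the coefficient of `η`. -/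
abbrev Hs (n : ℕ) : Type := (Fin (2*n-6) → ℝ) × ℝ

/-- The underlying vector space of `g = gl₂(ℝ) ⋉ heis_{2n-5}`. -/
abbrev Gg (n : ℕ) : Type := G2 × Hs n

/-- The basis vector `ε_p` (1-based index `p`). -/
def epsV (n : ℕ) (p : ℕ) : Hs n := (fun i => if i.val + 1 = p then 1 else 0, 0)

/-- The central basis vector `η`. -/
def etaV (n : ℕ) : Hs n := (0, 1)

/-- The Heisenberg bracket, encoding `[ε_i, ε_{2n-5-i}] = (-1)^i η`. -/
def heisBr (n : ℕ) (x y : Hs n) : Hs n :=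
  (0, ∑ i : Fin (2*n-6), (-1 : ℝ)^(i.val+1) * x.1 i * y.1 i.rev)

/-- The `gl₂(ℝ)` bracket: `[X,Y]=H`, `[H,X]=2X`, `[H,Y]=-2Y`, and `E` is central. -/
def gl2Br (a b : G2) : G2 :=
  ![-2*(a 1 * b 0 - a 0 * b 1), a 3 * b 0 - a 0 * b 3, 0, 2*(a 1 * b 3 - a 3 * b 1)]

/-- The map `φ : gl₂(ℝ) → End(heis_{2n-5})` from the paper. -/
def phi (n : ℕ) (a : G2) (v : Hs n) : Hs n :=
  (fun i =>
      a 1 * (2*(i.val:ℝ) + 7 - 2*(n:ℝ)) * v.1 i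
    + a 2 * v.1 i
    + a 3 * (if h : 0 < i.val then v.1 ⟨i.val - 1, by have := i.isLt; omega⟩ else 0)
    + a 0 * (((i.val:ℝ)+1) * (2*(n:ℝ) - 7 - (i.val:ℝ))) *
        (if h : i.val + 1 < 2*n-6 then v.1 ⟨i.val+1, h⟩ else 0),
   2 * a 2 * v.2)

/-- The bracket of the semidirect product `g = gl₂(ℝ) ⋉_φ heis_{2n-5}`. -/
def gBr (n : ℕ) (x y : Gg n) : Gg n :=
  (gl2Br x.1 y.1, phi n x.1 y.2 - phi n y.1 x.2 + heisBr n x.2 y.2)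

def bY (n : ℕ) : Gg n := (![1,0,0,0], 0)
def bH (n : ℕ) : Gg n := (![0,1,0,0], 0)
def bE (n : ℕ) : Gg n := (![0,0,1,0], 0)
def bX (n : ℕ) : Gg n := (![0,0,0,1], 0)
def bEps (n : ℕ) (p : ℕ) : Gg n := (0, epsV n p)
def bEta (n : ℕ) : Gg n := (0, etaV n)

/-- The weight-`w` graded component of `g` in the grading of `s^{k,n}`: the span of the
basis elements of weight `w`, where `wght Y = 1`, `wght H = wght E = 0`, `wght X = -1`,
`wght ε_p = n-4-k-p`, `wght η = -3-2k`. -/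
def gComp (n k : ℕ) (w : ℤ) : Submodule ℝ (Gg n) :=
  Submodule.span ℝ {v : Gg n |
    (v = bY n ∧ w = 1) ∨ ((v = bH n ∨ v = bE n) ∧ w = 0) ∨ (v = bX n ∧ w = -1) ∨
    (∃ p : ℕ, 1 ≤ p ∧ p ≤ 2*n-6 ∧ v = bEps n p ∧ w = (n:ℤ) - 4 - (k:ℤ) - (p:ℤ)) ∨
    (v = bEta n ∧ w = -3 - 2*(k:ℤ))}

/-- The negative part `m = s^{k,n}` of `g` (for `0 ≤ k ≤ n-4`): the span of the basis
elements of negative weight, i.e. of `X`, `ε_p` for `n-3-k ≤ p ≤ 2n-6`, and `η`. -/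
def mSub (n k : ℕ) : Submodule ℝ (Gg n) where
  carrier := {x | x.1 0 = 0 ∧ x.1 1 = 0 ∧ x.1 2 = 0 ∧
    ∀ i : Fin (2*n-6), ((i.val:ℤ) + 1 < (n:ℤ) - 3 - (k:ℤ) → x.2.1 i = 0)}
  add_mem' := by
    rintro a b ⟨ha0, ha1, ha2, ha3⟩ ⟨hb0, hb1, hb2, hb3⟩
    exact ⟨by simp [ha0, hb0], by simp [ha1, hb1], by simp [ha2, hb2],
      fun i hi => by simp [ha3 i hi, hb3 i hi]⟩
  zero_mem' := ⟨rfl, rfl, rfl, fun i _ => rfl⟩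
  smul_mem' := by
    rintro c a ⟨ha0, ha1, ha2, ha3⟩
    exact ⟨by simp [ha0], by simp [ha1], by simp [ha2], fun i hi => by simp [ha3 i hi]⟩

/-- The non-negative part `g⁰` of `g` in the grading of `s^{k,n}`. -/
def g0Sub (n k : ℕ) : Submodule ℝ (Gg n) where
  carrier := {x | x.1 3 = 0 ∧ x.2.2 = 0 ∧
    ∀ i : Fin (2*n-6), ((n:ℤ) - 3 - (k:ℤ) ≤ (i.val:ℤ) + 1 → x.2.1 i = 0)}
  add_mem' := by
    rintro a b ⟨ha0, ha1, ha3⟩ ⟨hb0, hb1, hb3⟩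
    exact ⟨by simp [ha0, hb0], by simp [ha1, hb1], fun i hi => by simp [ha3 i hi, hb3 i hi]⟩
  zero_mem' := ⟨rfl, rfl, fun i _ => rfl⟩
  smul_mem' := by
    rintro c a ⟨ha0, ha1, ha3⟩
    exact ⟨by simp [ha0], by simp [ha1], fun i hi => by simp [ha3 i hi]⟩

/-- The negative part `m` of `g`, as a type. -/
abbrev MT (n k : ℕ) := ↥(mSub n k)

/-- The projection `π_m : g → m` along `g⁰`. -/
def Pm (n k : ℕ) (x : Gg n) : Gg n :=
  (![0, 0, 0, x.1 3],
   (fun i => if (n:ℤ) - 3 - (k:ℤ) ≤ (i.val:ℤ) + 1 then x.2.1 i else 0, x.2.2))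

lemma Pm_mem (n k : ℕ) (x : Gg n) : Pm n k x ∈ mSub n k := by
  refine ⟨?_, ?_, ?_, fun i hi => ?_⟩
  · simp [Pm]
  · simp [Pm]
  · simp [Pm]
  · show (if (n:ℤ) - 3 - (k:ℤ) ≤ (i.val:ℤ) + 1 then x.2.1 i else 0) = 0
    rw [if_neg (by omega)]

/-- The projection `π_m : g → m`, viewed as a map into `m`. -/
def ptoM (n k : ℕ) (x : Gg n) : MT n k := ⟨Pm n k x, Pm_mem n k x⟩

/-- The Lie bracket of `m` (the bracket of `g` restricted to `m`; since `m` is closed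
under the bracket, composing with the projection `π_m` does not change the value). -/
def mBrM (n k : ℕ) (x y : MT n k) : MT n k := ptoM n k (gBr n x.1 y.1)

/-- `ψ` is an ℝ-linear map `m → g`, i.e. an element of `C¹(m,g)`. -/
def IsLin1 (n k : ℕ) (ψ : MT n k → Gg n) : Prop :=
  (∀ x y, ψ (x + y) = ψ x + ψ y) ∧ ∀ (c : ℝ) (x), ψ (c • x) = c • ψ x

/-- `ψ` is an alternating ℝ-bilinear map `m × m → g`, i.e. an element of `C²(m,g)`. -/
def IsAlt2 (n k : ℕ) (ψ : MT n k → MT n k → Gg n) : Prop :=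
  (∀ y, IsLin1 n k (fun x => ψ x y)) ∧ (∀ x, IsLin1 n k (ψ x)) ∧ ∀ x, ψ x x = 0

/-- The coboundary `∂ : C¹(m,g) → C²(m,g)`,
`(∂φ)(x,y) = [x, φ y] - [y, φ x] + φ [x,y]`. -/
def cobound (n k : ℕ) (φ : MT n k → Gg n) : MT n k → MT n k → Gg n :=
  fun x y => gBr n x.1 (φ y) - gBr n y.1 (φ x) + φ (mBrM n k x y)

/-- A 1-cochain is homogeneous of weight `w` if `ψ(g_p) ⊆ g_{p+w}` for all `p < 0`. -/
def Homog1 (n k : ℕ) (w : ℤ) (ψ : MT n k → Gg n) : Prop :=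
  ∀ p : ℤ, p < 0 → ∀ x : MT n k, (x : Gg n) ∈ gComp n k p → ψ x ∈ gComp n k (p + w)

/-- A 2-cochain is homogeneous of weight `w` if `ψ(g_p × g_q) ⊆ g_{p+q+w}` for `p,q < 0`. -/
def Homog2 (n k : ℕ) (w : ℤ) (ψ : MT n k → MT n k → Gg n) : Prop :=
  ∀ p q : ℤ, p < 0 → q < 0 → ∀ x y : MT n k,
    (x : Gg n) ∈ gComp n k p → (y : Gg n) ∈ gComp n k q → ψ x y ∈ gComp n k (p + q + w)

/-- `C¹₊(m,g)`: the span of the homogeneous 1-cochains of positive weight. -/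
def C1plus (n k : ℕ) : Submodule ℝ (MT n k → Gg n) :=
  Submodule.span ℝ {ψ | IsLin1 n k ψ ∧ ∃ w : ℤ, 0 < w ∧ Homog1 n k w ψ}

/-- `C²₊(m,g)`: the span of the homogeneous alternating 2-cochains of positive weight. -/
def C2plus (n k : ℕ) : Submodule ℝ (MT n k → MT n k → Gg n) :=
  Submodule.span ℝ {ψ | IsAlt2 n k ψ ∧ ∃ w : ℤ, 0 < w ∧ Homog2 n k w ψ}

/-- The image `∂(C¹₊(m,g)) ⊆ C²(m,g)`. -/
def imDel (n k : ℕ) : Submodule ℝ (MT n k → MT n k → Gg n) :=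
  Submodule.span ℝ (cobound n k '' {φ | φ ∈ C1plus n k})

/-- The action of `A ∈ g⁰` on 1-cochains: `(A·ψ)(x) = [A, ψ x] - ψ(π_m [A, x])`. -/
def act1 (n k : ℕ) (A : Gg n) (ψ : MT n k → Gg n) : MT n k → Gg n :=
  fun x => gBr n A (ψ x) - ψ (ptoM n k (gBr n A x.1))

/-- The action of `A ∈ g⁰` on 2-cochains:
`(A·ψ)(x,y) = [A, ψ x y] - ψ(π_m [A, x]) y - ψ x (π_m [A, y])`. -/
def act2 (n k : ℕ) (A : Gg n) (ψ : MT n k → MT n k → Gg n) : MT n k → MT n k → Gg n :=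
  fun x y => gBr n A (ψ x y) - ψ (ptoM n k (gBr n A x.1)) y - ψ x (ptoM n k (gBr n A y.1))

/-- The coefficient of `ε_p` (the dual functional `ε*_p`). -/
def epsCoef (n : ℕ) (p : ℕ) (x : Gg n) : ℝ :=
  if h : 1 ≤ p ∧ p ≤ 2*n-6 then x.2.1 ⟨p-1, by omega⟩ else 0

/-- The 1-cochain `ε*_{n-3-k} ⊗ ε_{2n-6}`. -/
def cA (n k : ℕ) : MT n k → Gg n := fun x => epsCoef n (n-3-k) x.1 • bEps n (2*n-6)

/-- The 1-cochain `X* ⊗ ε_{n-4-k}`. -/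
def cB (n k : ℕ) : MT n k → Gg n := fun x => (x : Gg n).1 3 • bEps n (n-4-k)

/-- The 2-cochain `X* ∧ ε*_{n-1+k} ⊗ η`. -/
def cC (n k : ℕ) : MT n k → MT n k → Gg n := fun x y =>
  ((x : Gg n).1 3 * epsCoef n (n-1+k) y.1 - (y : Gg n).1 3 * epsCoef n (n-1+k) x.1) • bEta n

/-- The 2-cochain `ε*_{n-3-k} ∧ η* ⊗ ε_{2n-6}`. -/
def cD (n k : ℕ) : MT n k → MT n k → Gg n := fun x y =>
  (epsCoef n (n-3-k) x.1 * (y : Gg n).2.2 - epsCoef n (n-3-k) y.1 * (x : Gg n).2.2) • bEps n (2*n-6)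

/-- for `0 ≤ k ≤ n-5`, in the grading of `s^{k,n}`, the eigenspace of the
operator `ψ ↦ H·ψ` on `C¹(m,g)` with eigenvalue `2(n+k-3)` is one-dimensional, spanned
by the cochain `ε*_{n-3-k} ⊗ ε_{2n-6}`; moreover `2(n+k-3)` is the largest eigenvalue
of this operator on `C¹(m,g)`. -/
lemma gBr_H (n : ℕ) (v : Gg n) :
    gBr n (bH n) v =
      (![-2 * v.1 0, 0, 0, 2 * v.1 3],
        (fun i => (2*(i.val:ℝ) + 7 - 2*(n:ℝ)) * v.2.1 i, 0)) := by
  refine Prod.ext ?_ (Prod.ext ?_ ?_)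
  · funext j
    fin_cases j <;> simp [gBr, gl2Br, bH] <;> ring
  · funext i
    simp only [gBr, bH, phi, heisBr]
    show (_ : ℝ) + _ = _
    have h2 : (![0, 1, 0, 0] : Fin 4 → ℝ) 2 = 0 := rfl
    have h3 : (![0, 1, 0, 0] : Fin 4 → ℝ) 3 = 0 := rfl
    norm_num [h2, h3]
  · simp [gBr, bH, phi, heisBr]

lemma eig_comps (n : ℕ) (v : Gg n) (ν : ℝ) (h : gBr n (bH n) v = ν • v) :
    (-2) * v.1 0 = ν * v.1 0 ∧ 0 = ν * v.1 1 ∧ 0 = ν * v.1 2 ∧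
    2 * v.1 3 = ν * v.1 3 ∧
    (∀ i : Fin (2*n-6), (2*(i.val:ℝ) + 7 - 2*(n:ℝ)) * v.2.1 i = ν * v.2.1 i) ∧
    0 = ν * v.2.2 := by
  rw [gBr_H] at h
  obtain ⟨h1, h2⟩ := Prod.mk.injEq _ _ _ _ ▸ h
  obtain ⟨h2, h3⟩ := Prod.mk.injEq _ _ _ _ ▸ h2
  refine ⟨?_, ?_, ?_, ?_, fun i => ?_, ?_⟩
  · simpa using congrFun h1 0
  · simpa using congrFun h1 1
  · simpa using congrFun h1 2
  · simpa using congrFun h1 3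
  · simpa using congrFun h2 i
  · simpa using h3

lemma cast_bound (n : ℕ) (hn : 6 ≤ n) (i : Fin (2*n-6)) : (i.val:ℝ) ≤ 2*(n:ℝ) - 7 := by
  have h1 : i.val ≤ 2*n-7 := by omega
  have h2 : ((2*n-7:ℕ):ℝ) = 2*(n:ℝ) - 7 := by push_cast [Nat.cast_sub (by omega : 7 ≤ 2*n)]; ring
  calc (i.val:ℝ) ≤ ((2*n-7:ℕ):ℝ) := by exact_mod_cast h1
    _ = _ := h2

lemma eig_big (n : ℕ) (hn : 6 ≤ n) (v : Gg n) (ν : ℝ) (hν : 2*(n:ℝ)-7 < ν)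
    (h : gBr n (bH n) v = ν • v) : v = 0 := by
  obtain ⟨h1, h2, h3, h4, h5, h6⟩ := eig_comps n v ν h
  have hn' : (6:ℝ) ≤ (n:ℝ) := by exact_mod_cast hn
  refine Prod.ext (funext fun j => ?_) (Prod.ext (funext fun i => ?_) ?_)
  · fin_cases j
    · show v.1 0 = 0; nlinarith [sq_nonneg (v.1 0)]
    · show v.1 1 = 0; nlinarith [sq_nonneg (v.1 1)]
    · show v.1 2 = 0; nlinarith [sq_nonneg (v.1 2)]
    · show v.1 3 = 0; nlinarith [sq_nonneg (v.1 3)]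
  · have hi := cast_bound n hn i
    have := h5 i
    show v.2.1 i = 0
    nlinarith [sq_nonneg (v.2.1 i)]
  · show v.2.2 = 0; nlinarith [sq_nonneg v.2.2]

lemma eig_top (n : ℕ) (hn : 6 ≤ n) (v : Gg n)
    (h : gBr n (bH n) v = (2*(n:ℝ)-7) • v) :
    v = v.2.1 ⟨2*n-7, by omega⟩ • bEps n (2*n-6) := by
  obtain ⟨h1, h2, h3, h4, h5, h6⟩ := eig_comps n v _ h
  have hn' : (6:ℝ) ≤ (n:ℝ) := by exact_mod_cast hn
  refine Prod.ext (funext fun j => ?_) (Prod.ext (funext fun i => ?_) ?_)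
  · have : ((v.2.1 ⟨2*n-7, by omega⟩ • bEps n (2*n-6)).1 : G2) = 0 := by
      simp [bEps]
    rw [this]
    fin_cases j
    · show v.1 0 = 0; nlinarith [sq_nonneg (v.1 0)]
    · show v.1 1 = 0; nlinarith [sq_nonneg (v.1 1)]
    · show v.1 2 = 0; nlinarith [sq_nonneg (v.1 2)]
    · show v.1 3 = 0; nlinarith [sq_nonneg (v.1 3)]
  · show v.2.1 i = v.2.1 ⟨2*n-7, by omega⟩ • (epsV n (2*n-6)).1 i
    simp only [epsV, smul_eq_mul]
    by_cases hc : i.val + 1 = 2*n-6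
    · have he : i = ⟨2*n-7, by omega⟩ := Fin.ext (show i.val = 2*n-7 by omega)
      rw [he]
      have hc2 : (⟨2*n-7, by omega⟩ : Fin (2*n-6)).val + 1 = 2*n-6 := by
        show 2*n-7+1 = 2*n-6
        omega
      rw [if_pos hc2, mul_one]
    · rw [if_neg hc, mul_zero]
      have := h5 i
      have hi : (i.val:ℝ) < 2*(n:ℝ) - 7 := by
        have h1 : i.val < 2*n-7 := by omega
        have h2 : ((2*n-7:ℕ):ℝ) = 2*(n:ℝ) - 7 := by
          push_cast [Nat.cast_sub (by omega : 7 ≤ 2*n)]; ring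
        calc (i.val:ℝ) < ((2*n-7:ℕ):ℝ) := by exact_mod_cast h1
          _ = _ := h2
      nlinarith [sq_nonneg (v.2.1 i)]
  · show v.2.2 = _
    simp [bEps, epsV]
    nlinarith [sq_nonneg v.2.2]

def mXv (n k : ℕ) : MT n k := ⟨bX n, by
  refine ⟨?_, ?_, ?_, fun i _ => rfl⟩ <;> simp [bX]⟩

def mEtaV (n k : ℕ) : MT n k := ⟨bEta n, ⟨rfl, rfl, rfl, fun i _ => rfl⟩⟩

def mEpsV (n k : ℕ) (i : Fin (2*n-6)) : MT n k :=
  if h : (n:ℤ) - 3 - (k:ℤ) ≤ (i.val:ℤ) + 1 then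
    ⟨bEps n (i.val+1), by
      refine ⟨rfl, rfl, rfl, fun j hj => ?_⟩
      show (if j.val + 1 = i.val + 1 then (1:ℝ) else 0) = 0
      rw [if_neg (by omega)]⟩
  else 0

lemma coe_mEpsV_pos (n k : ℕ) (i : Fin (2*n-6)) (h : (n:ℤ) - 3 - (k:ℤ) ≤ (i.val:ℤ) + 1) :
    ((mEpsV n k i : MT n k) : Gg n) = bEps n (i.val+1) := by
  rw [mEpsV, dif_pos h]

lemma mEpsV_neg (n k : ℕ) (i : Fin (2*n-6)) (h : ¬ ((n:ℤ) - 3 - (k:ℤ) ≤ (i.val:ℤ) + 1)) :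
    mEpsV n k i = 0 := by
  rw [mEpsV, dif_neg h]

lemma m_decomp (n k : ℕ) (x : MT n k) :
    x = (x:Gg n).1 3 • mXv n k + (x:Gg n).2.2 • mEtaV n k +
        ∑ i : Fin (2*n-6), (x:Gg n).2.1 i • mEpsV n k i := by
  have key : ∀ i : Fin (2*n-6),
      (x:Gg n).2.1 i • ((mEpsV n k i : MT n k) : Gg n) = (x:Gg n).2.1 i • bEps n (i.val+1) := by
    intro i
    by_cases h : (n:ℤ) - 3 - (k:ℤ) ≤ (i.val:ℤ) + 1
    · rw [coe_mEpsV_pos n k i h]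
    · rw [x.prop.2.2.2 i (by omega), zero_smul, zero_smul]
  apply Subtype.ext
  push_cast [Submodule.coe_sum]
  rw [Finset.sum_congr rfl (fun i _ => key i)]
  obtain ⟨h0, h1, h2, h4⟩ := x.prop
  refine Prod.ext (funext fun j => ?_) (Prod.ext (funext fun j => ?_) ?_)
  · have : (∑ i : Fin (2*n-6), (x:Gg n).2.1 i • bEps n (i.val+1)).1 = 0 := by
      rw [Prod.fst_sum]
      simp [bEps]
    simp only [Prod.fst_add, this, add_zero, Pi.add_apply, Prod.smul_fst, Pi.smul_apply,
      smul_eq_mul]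
    fin_cases j <;> simp [mXv, mEtaV, bX, bEta, h0, h1, h2]
  · simp only [Prod.snd_add, Prod.fst_add, Pi.add_apply, Prod.smul_snd, Prod.smul_fst,
      Pi.smul_apply, smul_eq_mul, Prod.snd_sum, Prod.fst_sum, Finset.sum_apply]
    have hX : ((mXv n k : MT n k) : Gg n).2.1 j = 0 := rfl
    have hE : ((mEtaV n k : MT n k) : Gg n).2.1 j = 0 := rfl
    rw [hX, hE, mul_zero, mul_zero, zero_add, zero_add]
    rw [Finset.sum_eq_single j]
    · show (x:Gg n).2.1 j = (x:Gg n).2.1 j * (if j.val + 1 = j.val + 1 then (1:ℝ) else 0)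
      rw [if_pos rfl, mul_one]
    · intro i _ hij
      show (x:Gg n).2.1 i * (if j.val + 1 = i.val + 1 then (1:ℝ) else 0) = 0
      rw [if_neg (fun hc => hij (Fin.ext (by omega))), mul_zero]
    · intro hj; exact absurd (Finset.mem_univ j) hj
  · simp only [Prod.snd_add, Prod.smul_snd, smul_eq_mul, Prod.snd_sum]
    have hX : ((mXv n k : MT n k) : Gg n).2.2 = 0 := rfl
    have hE : ((mEtaV n k : MT n k) : Gg n).2.2 = 1 := rfl
    have hS : ∑ i : Fin (2*n-6), (x:Gg n).2.1 i * (bEps n (i.val+1)).2.2 = 0 := by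
      apply Finset.sum_eq_zero; intro i _; show (x:Gg n).2.1 i * 0 = 0; rw [mul_zero]
    rw [hX, hE, hS, mul_zero, mul_one, zero_add, add_zero]

lemma lin_zero (n k : ℕ) (ψ : MT n k → Gg n) (hψ : IsLin1 n k ψ) : ψ 0 = 0 := by
  have := hψ.2 0 0
  simpa using this

lemma psi_decomp (n k : ℕ) (ψ : MT n k → Gg n) (hψ : IsLin1 n k ψ) (x : MT n k) :
    ψ x = (x:Gg n).1 3 • ψ (mXv n k) + (x:Gg n).2.2 • ψ (mEtaV n k) +
      ∑ i : Fin (2*n-6), (x:Gg n).2.1 i • ψ (mEpsV n k i) := by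
  let L : MT n k →ₗ[ℝ] Gg n := { toFun := ψ, map_add' := hψ.1, map_smul' := hψ.2 }
  show L x = (x:Gg n).1 3 • L (mXv n k) + (x:Gg n).2.2 • L (mEtaV n k) +
      ∑ i : Fin (2*n-6), (x:Gg n).2.1 i • L (mEpsV n k i)
  conv_lhs => rw [m_decomp n k x]
  rw [map_add, map_add, map_smul, map_smul, map_sum]
  congr 1
  exact Finset.sum_congr rfl (fun i _ => map_smul L _ _)

lemma ptoM_H_X (n k : ℕ) : ptoM n k (gBr n (bH n) (bX n)) = (2:ℝ) • mXv n k := by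
  apply Subtype.ext
  show Pm n k (gBr n (bH n) (bX n)) = (2:ℝ) • (bX n)
  rw [gBr_H]
  refine Prod.ext (funext fun j => ?_) (Prod.ext (funext fun j => ?_) ?_)
  · fin_cases j <;> simp [Pm, bX]
  · show (if (n:ℤ) - 3 - (k:ℤ) ≤ (j.val:ℤ) + 1 then (2*(j.val:ℝ)+7-2*(n:ℝ)) * (bX n).2.1 j else 0)
      = (2:ℝ) • (bX n).2.1 j
    have : (bX n).2.1 j = 0 := rfl
    rw [this, mul_zero, smul_zero, ite_self]
  · show (0:ℝ) = (2:ℝ) • (0:ℝ)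
    simp

lemma ptoM_H_eta (n k : ℕ) : ptoM n k (gBr n (bH n) (bEta n)) = 0 := by
  apply Subtype.ext
  show Pm n k (gBr n (bH n) (bEta n)) = 0
  rw [gBr_H]
  refine Prod.ext (funext fun j => ?_) (Prod.ext (funext fun j => ?_) ?_)
  · fin_cases j <;> simp [Pm, bEta]
  · show (if (n:ℤ) - 3 - (k:ℤ) ≤ (j.val:ℤ) + 1
        then (2*(j.val:ℝ)+7-2*(n:ℝ)) * (bEta n).2.1 j else 0) = 0
    have : (bEta n).2.1 j = 0 := rfl
    rw [this, mul_zero, ite_self]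
  · show (0:ℝ) = 0
    rfl

lemma ptoM_H_eps (n k : ℕ) (i : Fin (2*n-6)) (h : (n:ℤ) - 3 - (k:ℤ) ≤ (i.val:ℤ) + 1) :
    ptoM n k (gBr n (bH n) (bEps n (i.val+1))) =
      (2*(i.val:ℝ)+7-2*(n:ℝ)) • mEpsV n k i := by
  apply Subtype.ext
  show Pm n k (gBr n (bH n) (bEps n (i.val+1))) =
      (2*(i.val:ℝ)+7-2*(n:ℝ)) • ((mEpsV n k i : MT n k) : Gg n)
  rw [gBr_H, coe_mEpsV_pos n k i h]
  refine Prod.ext (funext fun j => ?_) (Prod.ext (funext fun j => ?_) ?_)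
  · fin_cases j <;> simp [Pm, bEps]
  · show (if (n:ℤ) - 3 - (k:ℤ) ≤ (j.val:ℤ) + 1
        then (2*(j.val:ℝ)+7-2*(n:ℝ)) * (bEps n (i.val+1)).2.1 j else 0)
      = (2*(i.val:ℝ)+7-2*(n:ℝ)) • (bEps n (i.val+1)).2.1 j
    show (if (n:ℤ) - 3 - (k:ℤ) ≤ (j.val:ℤ) + 1
        then (2*(j.val:ℝ)+7-2*(n:ℝ)) * (if j.val + 1 = i.val + 1 then (1:ℝ) else 0) else 0)
      = (2*(i.val:ℝ)+7-2*(n:ℝ)) • (if j.val + 1 = i.val + 1 then (1:ℝ) else 0)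
    by_cases hij : j.val + 1 = i.val + 1
    · have hji : j = i := Fin.ext (by omega)
      subst hji
      rw [if_pos hij, if_pos (by omega), mul_one, smul_eq_mul, mul_one]
    · rw [if_neg hij, mul_zero, ite_self, smul_zero]
  · show (0:ℝ) = _ • (0:ℝ)
    simp

lemma eig_basis (n k : ℕ) (ψ : MT n k → Gg n) (hψ : IsLin1 n k ψ) (μ : ℝ)
    (hact : act1 n k (bH n) ψ = μ • ψ) :
    gBr n (bH n) (ψ (mXv n k)) = (μ + 2) • ψ (mXv n k) ∧
    gBr n (bH n) (ψ (mEtaV n k)) = μ • ψ (mEtaV n k) ∧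
    ∀ i : Fin (2*n-6), (n:ℤ) - 3 - (k:ℤ) ≤ (i.val:ℤ) + 1 →
      gBr n (bH n) (ψ (mEpsV n k i)) =
        (μ + (2*(i.val:ℝ)+7-2*(n:ℝ))) • ψ (mEpsV n k i) := by
  refine ⟨?_, ?_, fun i h => ?_⟩
  · have h' := congrFun hact (mXv n k)
    simp only [act1, Pi.smul_apply] at h'
    have hv : (mXv n k).1 = bX n := rfl
    rw [hv, ptoM_H_X, hψ.2, sub_eq_iff_eq_add] at h'
    rw [h', add_smul]
  · have h' := congrFun hact (mEtaV n k)
    simp only [act1, Pi.smul_apply] at h'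
    have hv : (mEtaV n k).1 = bEta n := rfl
    rw [hv, ptoM_H_eta, lin_zero n k ψ hψ, sub_zero] at h'
    exact h'
  · have h' := congrFun hact (mEpsV n k i)
    simp only [act1, Pi.smul_apply] at h'
    have hv : (mEpsV n k i).1 = bEps n (i.val+1) := coe_mEpsV_pos n k i h
    rw [hv, ptoM_H_eps n k i h, hψ.2, sub_eq_iff_eq_add] at h'
    rw [h', add_smul]

lemma gBr_H_top (n : ℕ) (hn : 6 ≤ n) (c : ℝ) :
    gBr n (bH n) (c • bEps n (2*n-6)) = (2*(n:ℝ)-7) • (c • bEps n (2*n-6)) := by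
  rw [gBr_H]
  refine Prod.ext (funext fun j => ?_) (Prod.ext (funext fun j => ?_) ?_)
  · fin_cases j <;> simp [bEps]
  · show (2*(j.val:ℝ)+7-2*(n:ℝ)) * (c * (if j.val+1 = 2*n-6 then (1:ℝ) else 0))
       = (2*(n:ℝ)-7) * (c * (if j.val+1 = 2*n-6 then (1:ℝ) else 0))
    by_cases hj : j.val+1 = 2*n-6
    · rw [if_pos hj]
      have h1 : ((j.val:ℕ):ℤ) = 2*(n:ℤ)-7 := by omega
      have h2 : (j.val:ℝ) = 2*(n:ℝ)-7 := by exact_mod_cast h1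
      rw [h2]; ring
    · rw [if_neg hj]; ring
  · show (0:ℝ) = (2*(n:ℝ)-7) * (c * 0)
    simp

lemma cA_ptoM (n k : ℕ) (hn : 6 ≤ n) (hk : k ≤ n-5) (x : MT n k) :
    cA n k (ptoM n k (gBr n (bH n) (x:Gg n))) = (-1-2*(k:ℝ)) • cA n k x := by
  have hca : 1 ≤ n-3-k := by omega
  have hcb : n-3-k ≤ 2*n-6 := by omega
  have hc1 : 1 ≤ n-3-k ∧ n-3-k ≤ 2*n-6 := ⟨hca, hcb⟩
  simp only [cA]
  have key : epsCoef n (n-3-k) (ptoM n k (gBr n (bH n) (x:Gg n))).1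
      = (-1-2*(k:ℝ)) * epsCoef n (n-3-k) (x:Gg n) := by
    have hval : (ptoM n k (gBr n (bH n) (x:Gg n))).1
        = Pm n k (gBr n (bH n) (x:Gg n)) := rfl
    rw [hval, gBr_H, epsCoef, epsCoef, dif_pos hc1, dif_pos hc1]
    show (if (n:ℤ)-3-(k:ℤ) ≤ (((n-3-k-1 : ℕ) : ℤ))+1
        then (2*(((n-3-k-1:ℕ)):ℝ)+7-2*(n:ℝ)) * (x:Gg n).2.1 ⟨n-3-k-1, by omega⟩ else 0)
      = (-1-2*(k:ℝ)) * (x:Gg n).2.1 ⟨n-3-k-1, by omega⟩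
    rw [if_pos (by omega)]
    have h1 : ((n-3-k-1:ℕ):ℤ) = (n:ℤ)-4-(k:ℤ) := by omega
    have h2 : ((n-3-k-1:ℕ):ℝ) = (n:ℝ)-4-(k:ℝ) := by exact_mod_cast h1
    rw [h2]
    ring_nf
  rw [key, mul_smul]

set_option maxHeartbeats 2000000 in
theorem H_eigenspace_on_C1 (n k : ℕ) (hn : 6 ≤ n) (hk : k ≤ n - 5) :
    IsLin1 n k (cA n k) ∧ cA n k ≠ 0 ∧
    act1 n k (bH n) (cA n k) = (2*(n:ℝ) + 2*(k:ℝ) - 6) • cA n k ∧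
    (∀ ψ : MT n k → Gg n, IsLin1 n k ψ →
      act1 n k (bH n) ψ = (2*(n:ℝ) + 2*(k:ℝ) - 6) • ψ → ∃ c : ℝ, ψ = c • cA n k) ∧
    (∀ μ : ℝ, 2*(n:ℝ) + 2*(k:ℝ) - 6 < μ →
      ∀ ψ : MT n k → Gg n, IsLin1 n k ψ → act1 n k (bH n) ψ = μ • ψ → ψ = 0) := by
  have hn' : (6:ℝ) ≤ (n:ℝ) := by exact_mod_cast hn
  have hk' : (0:ℝ) ≤ (k:ℝ) := Nat.cast_nonneg k
  have hkn : (k:ℝ) ≤ (n:ℝ) - 5 := by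
    have : ((k:ℕ):ℤ) ≤ (n:ℤ) - 5 := by omega
    exact_mod_cast this
  have hca : 1 ≤ n-3-k := by omega
  have hcb : n-3-k ≤ 2*n-6 := by omega
  have hc1 : 1 ≤ n-3-k ∧ n-3-k ≤ 2*n-6 := ⟨hca, hcb⟩
  set i0 : Fin (2*n-6) := ⟨n-4-k, by omega⟩ with hi0def
  have hcond0 : (n:ℤ) - 3 - (k:ℤ) ≤ (i0.val:ℤ) + 1 := by
    show (n:ℤ)-3-(k:ℤ) ≤ ((n-4-k:ℕ):ℤ)+1
    omega
  have hi0R : (i0.val:ℝ) = (n:ℝ)-4-(k:ℝ) := by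
    have h1 : ((n-4-k:ℕ):ℤ) = (n:ℤ)-4-(k:ℤ) := by omega
    show ((n-4-k:ℕ):ℝ) = _
    exact_mod_cast h1
  have hlinA : IsLin1 n k (cA n k) := by
    constructor
    · intro x y
      simp only [cA, epsCoef]
      rw [dif_pos hc1, dif_pos hc1, dif_pos hc1, ← add_smul]
      rfl
    · intro c x
      simp only [cA, epsCoef]
      rw [dif_pos hc1, dif_pos hc1]
      rw [show ((c • x : MT n k) : Gg n).2.1 ⟨n-3-k-1, by omega⟩
          = c * (x : Gg n).2.1 ⟨n-3-k-1, by omega⟩ from rfl, mul_smul]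
  have hEc : epsCoef n (n-3-k) (bEps n (i0.val+1)) = 1 := by
    rw [epsCoef, dif_pos hc1]
    show (if (n-3-k-1)+1 = i0.val+1 then (1:ℝ) else 0) = 1
    rw [if_pos (show (n-3-k-1)+1 = (n-4-k)+1 by omega)]
  refine ⟨hlinA, ?_, ?_, ?_, ?_⟩
  · -- cA ≠ 0
    intro h0
    have h1 := congrFun h0 (mEpsV n k i0)
    simp only [cA] at h1
    rw [show (mEpsV n k i0).1 = bEps n (i0.val+1) from coe_mEpsV_pos n k i0 hcond0,
      hEc, one_smul] at h1
    have h3 : (bEps n (2*n-6)).2.1 ⟨2*n-7, by omega⟩ = 1 := by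
      show (if 2*n-7+1 = 2*n-6 then (1:ℝ) else 0) = 1
      rw [if_pos (by omega)]
    rw [show (bEps n (2*n-6) : Gg n) = (0 : MT n k → Gg n) (mEpsV n k i0) from h1] at h3
    norm_num at h3
  · -- eigenvector equation
    funext x
    show gBr n (bH n) (cA n k x) - cA n k (ptoM n k (gBr n (bH n) x.1))
        = (2*(n:ℝ) + 2*(k:ℝ) - 6) • cA n k x
    have hA : gBr n (bH n) (cA n k x) = (2*(n:ℝ)-7) • cA n k x := gBr_H_top n hn _
    rw [hA, cA_ptoM n k hn hk x, ← sub_smul]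
    congr 1
    ring
  · -- uniqueness
    intro ψ hψ hact
    obtain ⟨hx, he, heps⟩ := eig_basis n k ψ hψ _ hact
    have vX : ψ (mXv n k) = 0 := eig_big n hn _ _ (by linarith) hx
    have vE : ψ (mEtaV n k) = 0 := eig_big n hn _ _ (by linarith) he
    have vP : ∀ i : Fin (2*n-6), i ≠ i0 → ψ (mEpsV n k i) = 0 := by
      intro i hne
      by_cases h : (n:ℤ)-3-(k:ℤ) ≤ (i.val:ℤ)+1
      · refine eig_big n hn _ _ ?_ (heps i h)
        have h2 : (n:ℤ)-3-(k:ℤ) ≤ (i.val:ℤ) := by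
          have : i.val ≠ n-4-k := fun hc => hne (Fin.ext hc)
          omega
        have h3 : ((n:ℝ)-3-(k:ℝ)) ≤ (i.val:ℝ) := by exact_mod_cast h2
        linarith
      · rw [mEpsV_neg n k i h, lin_zero n k ψ hψ]
    have htop : gBr n (bH n) (ψ (mEpsV n k i0)) = (2*(n:ℝ)-7) • ψ (mEpsV n k i0) := by
      have hs : (2*(n:ℝ) + 2*(k:ℝ) - 6) + (2*(i0.val:ℝ)+7-2*(n:ℝ)) = 2*(n:ℝ)-7 := by
        rw [hi0R]; ring
      rw [← hs]
      exact heps i0 hcond0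
    have vTop := eig_top n hn _ htop
    set c : ℝ := (ψ (mEpsV n k i0)).2.1 ⟨2*n-7, by omega⟩ with hcdef
    refine ⟨c, ?_⟩
    funext x
    rw [psi_decomp n k ψ hψ x, vX, vE, smul_zero, smul_zero, zero_add, zero_add]
    rw [Finset.sum_eq_single i0 (fun i _ hne => by rw [vP i hne, smul_zero])
      (fun hj => absurd (Finset.mem_univ i0) hj)]
    rw [vTop]
    show (x:Gg n).2.1 i0 • (c • bEps n (2*n-6))
      = c • (epsCoef n (n-3-k) (x:Gg n) • bEps n (2*n-6))
    have hidx : (⟨n-3-k-1, by omega⟩ : Fin (2*n-6)) = i0 := by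
      apply Fin.ext
      show n-3-k-1 = n-4-k
      omega
    have hec : epsCoef n (n-3-k) (x:Gg n) = (x:Gg n).2.1 i0 := by
      rw [epsCoef, dif_pos hc1]
      exact congrArg (fun j => (x:Gg n).2.1 j) hidx
    rw [hec, smul_smul, smul_smul, mul_comm ((x:Gg n).2.1 i0) c]
  · -- maximality
    intro μ hμ ψ hψ hact
    obtain ⟨hx, he, heps⟩ := eig_basis n k ψ hψ _ hact
    have vX : ψ (mXv n k) = 0 := eig_big n hn _ _ (by linarith) hx
    have vE : ψ (mEtaV n k) = 0 := eig_big n hn _ _ (by linarith) he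
    have vP : ∀ i : Fin (2*n-6), ψ (mEpsV n k i) = 0 := by
      intro i
      by_cases h : (n:ℤ)-3-(k:ℤ) ≤ (i.val:ℤ)+1
      · refine eig_big n hn _ _ ?_ (heps i h)
        have h3 : ((n:ℝ)-3-(k:ℝ)) ≤ (i.val:ℝ)+1 := by exact_mod_cast h
        linarith
      · rw [mEpsV_neg n k i h, lin_zero n k ψ hψ]
    funext x
    rw [psi_decomp n k ψ hψ x, vX, vE, smul_zero, smul_zero, zero_add, zero_add]
    show _ = (0 : MT n k → Gg n) x
    rw [Finset.sum_eq_zero (fun i _ => by rw [vP i, smul_zero])]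
    rfl
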